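/- arXiv:2211.12639 — 6 statements merged into one kernel-verified Lean document; each statement's English description precedes it below -/
import Mathlib

section
/- Let d ≥ 1 and let Ω ⊆ ℝᵈ be a nonempty closed convex set that contains no affine line. Then there exist a point p ∈ ℝᵈ, a unit vector e, and a constant β > 0 such that ⟨X − p, e⟩ ≥ β·‖X − p‖ for every X ∈ Ω. -/
open RealInnerProductSpace Filter

variable {d : ℕ}

private lemma recession_dir {Ω : Set (EuclideanSpace ℝ (Fin d))}
    (hcl : IsClosed Ω) (hconv : Convex ℝ Ω) {x₀ : EuclideanSpace ℝ (Fin d)} (hx₀ : x₀ ∈ Ω)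
    (X : ℕ → EuclideanSpace ℝ (Fin d)) (hX : ∀ n, X n ∈ Ω)
    (hgrow : ∀ n : ℕ, (n : ℝ) + 1 ≤ ‖X n - x₀‖) :
    ∃ v : EuclideanSpace ℝ (Fin d), ‖v‖ = 1 ∧ (∀ t : ℝ, 0 ≤ t → x₀ + t • v ∈ Ω) ∧
      ∃ φ : ℕ → ℕ, StrictMono φ ∧
        Tendsto (fun n => (‖X (φ n) - x₀‖)⁻¹ • (X (φ n) - x₀)) atTop (nhds v) := by
  have hr : ∀ n, 0 < ‖X n - x₀‖ := fun n =>
    lt_of_lt_of_le (by positivity) (hgrow n)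
  set u : ℕ → EuclideanSpace ℝ (Fin d) := fun n => (‖X n - x₀‖)⁻¹ • (X n - x₀) with hu_def
  have hu : ∀ n, u n ∈ Metric.sphere (0 : EuclideanSpace ℝ (Fin d)) 1 := by
    intro n
    rw [mem_sphere_zero_iff_norm, hu_def, norm_smul, norm_inv, norm_norm]
    exact inv_mul_cancel₀ (hr n).ne'
  obtain ⟨v, hv, φ, hφ, hlim⟩ := (isCompact_sphere (0 : EuclideanSpace ℝ (Fin d)) 1).tendsto_subseq hu
  refine ⟨v, mem_sphere_zero_iff_norm.mp hv, ?_, φ, hφ, hlim⟩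
  intro t ht
  have htend : Tendsto (fun n => x₀ + t • u (φ n)) atTop (nhds (x₀ + t • v)) :=
    tendsto_const_nhds.add (hlim.const_smul t)
  refine hcl.mem_of_tendsto htend ?_
  filter_upwards [eventually_ge_atTop ⌈t⌉₊] with n hn
  set r : ℝ := ‖X (φ n) - x₀‖ with hr_def
  have hrpos : 0 < r := hr (φ n)
  have htr : t ≤ r := by
    calc t ≤ (⌈t⌉₊ : ℝ) := Nat.le_ceil t
    _ ≤ (n : ℝ) := by exact_mod_cast hn
    _ ≤ (φ n : ℝ) := by exact_mod_cast hφ.le_apply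
    _ ≤ (φ n : ℝ) + 1 := by linarith
    _ ≤ r := hgrow (φ n)
  set s : ℝ := t * r⁻¹ with hs_def
  have hs0 : 0 ≤ s := by positivity
  have hs1 : s ≤ 1 := by
    rw [hs_def]
    rw [mul_inv_le_iff₀ hrpos, one_mul]
    exact htr
  have hmem := hconv hx₀ (hX (φ n)) (by linarith : (0:ℝ) ≤ 1 - s) hs0 (by ring)
  have heq : (1 - s) • x₀ + s • X (φ n) = x₀ + t • u (φ n) := by
    rw [hu_def]
    simp only [smul_smul, hs_def]
    module
  rwa [heq] at hmem
/-- A nonempty closed convex set in `ℝᵈ` containing no affine line lies in a uniform cone: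
there are `p`, a unit vector `e`, and `β > 0` with `⟨X - p, e⟩ ≥ β‖X - p‖` on the set. -/
theorem exists_uniform_cone_of_no_line (d : ℕ) (hd : 1 ≤ d)
    (Ω : Set (EuclideanSpace ℝ (Fin d)))
    (hne : Ω.Nonempty) (hcl : IsClosed Ω) (hconv : Convex ℝ Ω)
    (hline : ¬ ∃ (q v : EuclideanSpace ℝ (Fin d)), v ≠ 0 ∧ ∀ t : ℝ, q + t • v ∈ Ω) :
    ∃ (p e : EuclideanSpace ℝ (Fin d)) (β : ℝ), ‖e‖ = 1 ∧ 0 < β ∧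
      ∀ X ∈ Ω, β * ‖X - p‖ ≤ ⟪X - p, e⟫ := by
  classical
  obtain ⟨x₀, hx₀⟩ := hne
  set C : Set (EuclideanSpace ℝ (Fin d)) := {v | ∀ t : ℝ, 0 ≤ t → x₀ + t • v ∈ Ω} with hC_def
  -- C is closed
  have hCclosed : IsClosed C := by
    have : C = ⋂ t : {t : ℝ // 0 ≤ t},
        (fun v : EuclideanSpace ℝ (Fin d) => x₀ + (t : ℝ) • v) ⁻¹' Ω := by
      ext v
      simp only [hC_def, Set.mem_setOf_eq, Set.mem_iInter, Set.mem_preimage, Subtype.forall]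
    rw [this]
    exact isClosed_iInter fun t => hcl.preimage (continuous_const.add (continuous_const_smul _))
  have hC0 : (0 : EuclideanSpace ℝ (Fin d)) ∈ C := fun t ht => by simpa using hx₀
  have hCsmul : ∀ (c : ℝ), 0 ≤ c → ∀ v ∈ C, c • v ∈ C := by
    intro c hc v hv t ht
    show x₀ + t • c • v ∈ Ω
    rw [smul_smul]
    exact hv (t * c) (by positivity)
  have hCadd : ∀ v ∈ C, ∀ w ∈ C, v + w ∈ C := by
    intro v hv w hw t ht
    have h1 := hv (2 * t) (by linarith)
    have h2 := hw (2 * t) (by linarith)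
    have hmem := hconv h1 h2 (by norm_num : (0:ℝ) ≤ 1/2) (by norm_num : (0:ℝ) ≤ 1/2) (by norm_num)
    have heq : (1/2 : ℝ) • (x₀ + (2*t) • v) + (1/2 : ℝ) • (x₀ + (2*t) • w)
        = x₀ + t • (v + w) := by module
    show x₀ + t • (v + w) ∈ Ω
    rwa [heq] at hmem
  have hCpointed : ∀ v ∈ C, -v ∈ C → v = 0 := by
    intro v hv hnv
    by_contra hv0
    refine hline ⟨x₀, v, hv0, fun t => ?_⟩
    rcases le_or_gt 0 t with ht | ht
    · exact hv t ht
    · have := hnv (-t) (by linarith)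
      rwa [neg_smul_neg] at this
  -- the convex cone structure on C
  set K : ConvexCone ℝ (EuclideanSpace ℝ (Fin d)) :=
    { carrier := C
      smul_mem' := fun c hc v hv => hCsmul c hc.le v hv
      add_mem' := fun v hv w hw => hCadd v hv w hw } with hK_def
  have hKset : (K : Set (EuclideanSpace ℝ (Fin d))) = C := rfl
  -- a uniformly positive dual vector
  have key : ∃ e : EuclideanSpace ℝ (Fin d), ‖e‖ = 1 ∧
      ∃ α : ℝ, 0 < α ∧ ∀ v ∈ C, α * ‖v‖ ≤ ⟪v, e⟫ := by
    by_cases hCtriv : ∀ v ∈ C, v = (0 : EuclideanSpace ℝ (Fin d))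
    · refine ⟨EuclideanSpace.single ⟨0, hd⟩ (1:ℝ), by simp, 1, one_pos, ?_⟩
      intro v hv
      rw [hCtriv v hv]
      simp
    · push_neg at hCtriv
      obtain ⟨v₁, hv₁C, hv₁0⟩ := hCtriv
      set D : Set (EuclideanSpace ℝ (Fin d)) :=
        (ProperCone.innerDual (K : Set (EuclideanSpace ℝ (Fin d))) :
          Set (EuclideanSpace ℝ (Fin d))) with hD_def
      have hDbidual : ((ProperCone.innerDual D : ProperCone ℝ (EuclideanSpace ℝ (Fin d))) :
          Set (EuclideanSpace ℝ (Fin d))) = C := by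
        let P : ProperCone ℝ (EuclideanSpace ℝ (Fin d)) :=
          { carrier := C
            add_mem' := fun hv hw => hCadd _ hv _ hw
            zero_mem' := hC0
            smul_mem' := fun c v hv => hCsmul c c.2 v hv
            isClosed' := hCclosed }
        have hPset : (P : Set (EuclideanSpace ℝ (Fin d))) = C := rfl
        rw [hD_def, hKset, ← hPset, ProperCone.innerDual_innerDual]
      have hDint : (interior D).Nonempty := by
        by_contra hint
        rw [Set.not_nonempty_iff_eq_empty] at hint
        have hDconv : Convex ℝ D :=
          PointedCone.convex (ProperCone.innerDual (K : Set (EuclideanSpace ℝ (Fin d)))).toSubmodule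
        have hspan : affineSpan ℝ D ≠ ⊤ := by
          intro h
          rw [← hDconv.interior_nonempty_iff_affineSpan_eq_top] at h
          rw [hint] at h
          exact Set.not_nonempty_empty h
        have hD0 : (0 : EuclideanSpace ℝ (Fin d)) ∈ D := by rw [hD_def, SetLike.mem_coe]; exact zero_mem _
        have hvs : vectorSpan ℝ D ≠ ⊤ := by
          intro h
          exact hspan ((AffineSubspace.affineSpan_eq_top_iff_vectorSpan_eq_top_of_nonempty
            ℝ (EuclideanSpace ℝ (Fin d)) (EuclideanSpace ℝ (Fin d)) ⟨0, hD0⟩).mpr h)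
        have horth : (vectorSpan ℝ D)ᗮ ≠ ⊥ := by
          intro h
          exact hvs (Submodule.orthogonal_eq_bot_iff.mp h)
        obtain ⟨u, huo, hu0⟩ := Submodule.exists_mem_ne_zero_of_ne_bot horth
        have humem : ∀ x ∈ D, ⟪x, u⟫ = 0 := by
          intro x hx
          have hxv : x -ᵥ (0 : EuclideanSpace ℝ (Fin d)) ∈ vectorSpan ℝ D :=
            vsub_mem_vectorSpan ℝ hx hD0
          have := (Submodule.mem_orthogonal _ u).mp huo _ (by simpa using hxv)
          exact this
        have huC : u ∈ C := by
          rw [← hDbidual]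
          exact fun x hx => le_of_eq (humem x hx).symm
        have hnuC : -u ∈ C := by
          rw [← hDbidual]
          rw [SetLike.mem_coe, ProperCone.mem_innerDual]
          intro x hx
          rw [inner_neg_right, humem x hx]
          simp
        exact hu0 (hCpointed u huC hnuC)
      obtain ⟨e₀, he₀⟩ := hDint
      obtain ⟨ε, hε, hball⟩ := Metric.isOpen_iff.mp isOpen_interior e₀ he₀
      have hball' : Metric.ball e₀ ε ⊆ D := hball.trans interior_subset
      have hpos : ∀ v ∈ C, (ε/2) * ‖v‖ ≤ ⟪v, e₀⟫ := by
        intro v hv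
        rcases eq_or_ne v 0 with rfl | hv0
        · simp
        · have hnv : (0:ℝ) < ‖v‖ := norm_pos_iff.mpr hv0
          have hmem : e₀ - (ε/2) • (‖v‖⁻¹ • v) ∈ D := by
            apply hball'
            rw [Metric.mem_ball, dist_eq_norm]
            have heq2 : e₀ - (ε/2) • (‖v‖⁻¹ • v) - e₀ = -((ε/2) • (‖v‖⁻¹ • v)) := by module
            rw [heq2, norm_neg, norm_smul, norm_smul, norm_inv, norm_norm,
              inv_mul_cancel₀ hnv.ne', mul_one, Real.norm_eq_abs, abs_of_pos (by linarith)]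
            linarith
          have hip := ProperCone.mem_innerDual.mp hmem (show v ∈ (K : Set (EuclideanSpace ℝ (Fin d))) by rw [hKset]; exact hv)
          rw [inner_sub_right, real_inner_smul_right, real_inner_smul_right,
            real_inner_self_eq_norm_sq] at hip
          have hsq : ‖v‖⁻¹ * ‖v‖^2 = ‖v‖ := by
            field_simp
          rw [hsq] at hip
          linarith
      have he₀0 : e₀ ≠ 0 := by
        intro h
        have h1 := hpos v₁ hv₁C
        rw [h, inner_zero_right] at h1
        have h2 : ‖v₁‖ ≤ 0 := by nlinarith [norm_pos_iff.mpr hv₁0]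
        exact absurd h2 (not_le.mpr (norm_pos_iff.mpr hv₁0))
      have hne₀ : (0:ℝ) < ‖e₀‖ := norm_pos_iff.mpr he₀0
      refine ⟨‖e₀‖⁻¹ • e₀, ?_, (ε/2) / ‖e₀‖, by positivity, ?_⟩
      · rw [norm_smul, norm_inv, norm_norm, inv_mul_cancel₀ hne₀.ne']
      · intro v hv
        rw [real_inner_smul_right]
        calc (ε/2)/‖e₀‖ * ‖v‖ = ‖e₀‖⁻¹ * (ε/2 * ‖v‖) := by
              rw [div_mul_eq_mul_div, div_eq_inv_mul]
          _ ≤ ‖e₀‖⁻¹ * ⟪v, e₀⟫ := by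
              exact mul_le_mul_of_nonneg_left (hpos v hv) (by positivity)
  obtain ⟨e, he, α, hα, hkey⟩ := key
  -- uniform bound away from a compact region
  have hM : ∃ M : ℝ, 0 ≤ M ∧ ∀ X ∈ Ω, M ≤ ‖X - x₀‖ → α/2 * ‖X - x₀‖ ≤ ⟪X - x₀, e⟫ := by
    by_contra h
    push_neg at h
    choose X hXΩ hXn hXi using fun n : ℕ => h ((n : ℝ) + 1) (by positivity)
    obtain ⟨v, hv1, hvC, φ, hφ, hlim⟩ := recession_dir hcl hconv hx₀ X hXΩ hXn
    have hvin : α ≤ ⟪v, e⟫ := by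
      have h1 := hkey v hvC
      rwa [hv1, mul_one] at h1
    have htend : Tendsto (fun n => ⟪(‖X (φ n) - x₀‖)⁻¹ • (X (φ n) - x₀), e⟫) atTop
        (nhds ⟪v, e⟫) := hlim.inner tendsto_const_nhds
    have hub : ⟪v, e⟫ ≤ α/2 := by
      refine le_of_tendsto htend (Eventually.of_forall fun n => ?_)
      have hrpos : (0:ℝ) < ‖X (φ n) - x₀‖ := lt_of_lt_of_le (by positivity) (hXn (φ n))
      rw [real_inner_smul_left, inv_mul_le_iff₀ hrpos]
      calc ⟪X (φ n) - x₀, e⟫ ≤ α/2 * ‖X (φ n) - x₀‖ := (hXi (φ n)).le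
        _ = ‖X (φ n) - x₀‖ * (α/2) := by ring
    linarith
  obtain ⟨M, hM0, hMb⟩ := hM
  set R : ℝ := 3 * M + 1 with hR_def
  have hR0 : (0:ℝ) < R := by rw [hR_def]; linarith
  refine ⟨x₀ - R • e, e, min (1/2) (α/2), he, by positivity, ?_⟩
  intro X hX
  have hN0 : (0:ℝ) ≤ ‖X - x₀‖ := norm_nonneg _
  have hXp : X - (x₀ - R • e) = (X - x₀) + R • e := by module
  have hIP : ⟪X - (x₀ - R • e), e⟫ = ⟪X - x₀, e⟫ + R := by
    rw [hXp, inner_add_left, real_inner_smul_left, real_inner_self_eq_norm_sq, he]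
    ring
  have hnp : ‖X - (x₀ - R • e)‖ ≤ ‖X - x₀‖ + R := by
    rw [hXp]
    refine (norm_add_le _ _).trans ?_
    rw [norm_smul, he, Real.norm_eq_abs, abs_of_pos hR0, mul_one]
  have hnpn : (0:ℝ) ≤ ‖X - (x₀ - R • e)‖ := norm_nonneg _
  have hβ1 : min (1/2 : ℝ) (α/2) ≤ 1/2 := min_le_left _ _
  have hβ2 : min (1/2 : ℝ) (α/2) ≤ α/2 := min_le_right _ _
  have hβ0 : (0:ℝ) < min (1/2 : ℝ) (α/2) := by positivity
  rw [hIP]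
  rcases le_total ‖X - x₀‖ M with hcase | hcase
  · have hlow : -‖X - x₀‖ ≤ ⟪X - x₀, e⟫ := by
      have habs := abs_real_inner_le_norm (X - x₀) e
      rw [he, mul_one] at habs
      linarith [neg_abs_le ⟪X - x₀, e⟫]
    have h1 : min (1/2 : ℝ) (α/2) * ‖X - (x₀ - R • e)‖ ≤ 1/2 * (‖X - x₀‖ + R) :=
      mul_le_mul hβ1 hnp hnpn (by norm_num)
    rw [hR_def] at h1 ⊢
    nlinarith
  · have hi := hMb X hX hcase
    have h1 : min (1/2 : ℝ) (α/2) * ‖X - (x₀ - R • e)‖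
        ≤ min (1/2 : ℝ) (α/2) * (‖X - x₀‖ + R) :=
      mul_le_mul_of_nonneg_left hnp hβ0.le
    nlinarith
end

section
/- Let d ≥ 1 and let Ω ⊆ ℝᵈ be a closed convex unbounded set containing no affine line. Then there exists a unit vector e such that (i) e is a recession direction of Ω, i.e. X + t·e ∈ Ω for every X ∈ Ω and t ≥ 0, and (ii) for every h ∈ ℝ, the slab Ω ∩ {X : ⟨X, e⟩ ≤ h} is compact. -/
open RealInnerProductSpace Filter Metric

variable {d : ℕ}

/-- Lemma A: direction extraction from an unbounded subset. -/
lemma exists_ray_dir {Ω A : Set (EuclideanSpace ℝ (Fin d))}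
    (hcl : IsClosed Ω) (hconv : Convex ℝ Ω) (hA : A ⊆ Ω)
    (hub : ¬ Bornology.IsBounded A) {X₀ : EuclideanSpace ℝ (Fin d)} (hX₀ : X₀ ∈ Ω) :
    ∃ v : EuclideanSpace ℝ (Fin d), ‖v‖ = 1 ∧ (∀ t : ℝ, 0 ≤ t → X₀ + t • v ∈ Ω) ∧
      ∃ Y : ℕ → EuclideanSpace ℝ (Fin d), (∀ n, Y n ∈ A) ∧
        (∀ n : ℕ, (n : ℝ) < ‖Y n - X₀‖) ∧
        Tendsto (fun n => (‖Y n - X₀‖)⁻¹ • (Y n - X₀)) atTop (nhds v) := by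
  rw [isBounded_iff_forall_norm_le] at hub
  push_neg at hub
  have hZ : ∀ n : ℕ, ∃ Z ∈ A, (n : ℝ) < ‖Z - X₀‖ := by
    intro n
    obtain ⟨Z, hZA, hZn⟩ := hub (n + ‖X₀‖)
    refine ⟨Z, hZA, ?_⟩
    have := norm_sub_norm_le Z X₀
    linarith
  choose Z hZA hZn using hZ
  have hr : ∀ n, (0:ℝ) < ‖Z n - X₀‖ := fun n => lt_of_le_of_lt (Nat.cast_nonneg n) (hZn n)
  set u : ℕ → EuclideanSpace ℝ (Fin d) := fun n => (‖Z n - X₀‖)⁻¹ • (Z n - X₀) with hu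
  have husph : ∀ n, u n ∈ Metric.sphere (0 : EuclideanSpace ℝ (Fin d)) 1 := by
    intro n
    simp [hu, norm_smul, abs_of_pos (inv_pos.2 (hr n)), inv_mul_cancel₀ (hr n).ne']
  obtain ⟨v, hvsph, φ, hφ, hφt⟩ := (isCompact_sphere (0 : EuclideanSpace ℝ (Fin d)) 1).tendsto_subseq husph
  have hv1 : ‖v‖ = 1 := by simpa using hvsph
  refine ⟨v, hv1, ?_, fun n => Z (φ n), fun n => hZA _, fun n => lt_of_le_of_lt (by exact_mod_cast hφ.le_apply) (hZn (φ n)), hφt⟩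
  intro t ht
  -- X₀ + t • v is the limit of X₀ + t • u (φ n), which is in Ω for large n
  have hlim : Tendsto (fun n => X₀ + t • u (φ n)) atTop (nhds (X₀ + t • v)) := by
    exact tendsto_const_nhds.add (hφt.const_smul t)
  refine hcl.mem_of_tendsto hlim ?_
  filter_upwards [eventually_ge_atTop (Nat.ceil t)] with n hn
  have hrn := hr (φ n)
  have htr : t ≤ ‖Z (φ n) - X₀‖ := by
    have h1 : (Nat.ceil t : ℝ) ≤ φ n := by
      exact_mod_cast le_trans hn hφ.le_apply
    linarith [Nat.le_ceil t, hZn (φ n)]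
  set s : ℝ := t * (‖Z (φ n) - X₀‖)⁻¹ with hs
  have hs0 : 0 ≤ s := mul_nonneg ht (inv_nonneg.2 hrn.le)
  have hs1 : s ≤ 1 := by
    rw [hs, ← div_eq_mul_inv]
    exact (div_le_one hrn).2 htr
  have key : X₀ + t • u (φ n) = (1 - s) • X₀ + s • Z (φ n) := by
    simp only [hu, smul_smul, ← hs, smul_sub]
    module
  rw [key]
  exact hconv hX₀ (hA (hZA (φ n))) (by linarith) hs0 (by ring)

/-- Lemma B: ray transfer. -/
lemma ray_transfer {Ω : Set (EuclideanSpace ℝ (Fin d))}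
    (hcl : IsClosed Ω) (hconv : Convex ℝ Ω)
    {X₀ v : EuclideanSpace ℝ (Fin d)} (hray : ∀ t : ℝ, 0 ≤ t → X₀ + t • v ∈ Ω)
    {X : EuclideanSpace ℝ (Fin d)} (hX : X ∈ Ω) {t : ℝ} (ht : 0 ≤ t) :
    X + t • v ∈ Ω := by
  have hlim : Tendsto (fun n : ℕ => X + t • v + ((n:ℝ)+1)⁻¹ • (X₀ - X)) atTop
      (nhds (X + t • v)) := by
    have h0 : Tendsto (fun n : ℕ => ((n:ℝ)+1)⁻¹) atTop (nhds 0) :=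
      tendsto_one_div_add_atTop_nhds_zero_nat.congr (fun n => by rw [one_div])
    have := (h0.smul_const (X₀ - X)).const_add (X + t • v)
    simpa using this
  refine hcl.mem_of_tendsto hlim (Eventually.of_forall fun n => ?_)
  set l : ℝ := ((n:ℝ)+1)⁻¹ with hl
  have hl0 : 0 < l := by positivity
  have hl1 : l ≤ 1 := by
    rw [hl]
    rw [inv_le_one_iff₀]
    right; linarith [Nat.cast_nonneg (α := ℝ) n]
  have key : X + t • v + l • (X₀ - X) = (1 - l) • X + l • (X₀ + (t / l) • v) := by
    have : l • ((t / l) • v) = t • v := by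
      rw [smul_smul, mul_div_cancel₀ _ hl0.ne']
    rw [smul_add, this, smul_sub]
    module
  rw [key]
  exact hconv hX (hray (t / l) (div_nonneg ht hl0.le)) (by linarith) hl0.le (by ring)



lemma pointed_cone_pos (C : Set (EuclideanSpace ℝ (Fin d))) (hCcl : IsClosed C)
    (hCconv : Convex ℝ C) (hCsmul : ∀ v ∈ C, ∀ t : ℝ, 0 ≤ t → t • v ∈ C)
    (hCpt : ∀ v ∈ C, -v ∈ C → v = 0)
    (hCne : ∃ v ∈ C, v ≠ 0) :
    ∃ e ∈ C, ‖e‖ = 1 ∧ ∀ v ∈ C, v ≠ 0 → 0 < ⟪v, e⟫ := by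
  classical
  obtain ⟨v₀, hv₀C, hv₀⟩ := hCne
  have h0C : (0 : EuclideanSpace ℝ (Fin d)) ∈ C := by
    simpa using hCsmul v₀ hv₀C 0 le_rfl
  have hadd : ∀ a ∈ C, ∀ b ∈ C, a + b ∈ C := by
    intro a ha b hb
    have h2 : ((2:ℝ)) • ((1/2 : ℝ) • a + (1/2 : ℝ) • b) ∈ C :=
      hCsmul _ (hCconv ha hb (by norm_num) (by norm_num) (by norm_num)) 2 (by norm_num)
    have : ((2:ℝ)) • ((1/2 : ℝ) • a + (1/2 : ℝ) • b) = a + b := by module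
    rwa [this] at h2
  set S : Set (EuclideanSpace ℝ (Fin d)) := C ∩ sphere 0 1 with hS
  have hSne : S.Nonempty := by
    refine ⟨(‖v₀‖)⁻¹ • v₀, hCsmul v₀ hv₀C _ (by positivity), ?_⟩
    simp [norm_smul, abs_of_pos (inv_pos.2 (norm_pos_iff.2 hv₀)),
      inv_mul_cancel₀ (norm_ne_zero_iff.2 hv₀)]
  have hScomp : IsCompact S := (isCompact_sphere 0 1).inter_left hCcl
  have hnegcl : IsClosed (-C) := hCcl.neg
  have hnegne : (-C).Nonempty := ⟨0, by simpa using h0C⟩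
  -- minimum of infDist to -C over S
  obtain ⟨m, hmS, hmin⟩ := hScomp.exists_isMinOn hSne
    (continuous_infDist_pt (-C)).continuousOn
  set δ : ℝ := infDist m (-C) with hδ
  have hδpos : 0 < δ := by
    rw [hδ, ← hnegcl.notMem_iff_infDist_pos hnegne]
    intro hm
    have hm0 : m = 0 := hCpt m hmS.1 (by simpa [Set.mem_neg] using hm)
    have h2 := hmS.2
    rw [hm0] at h2
    simp at h2
  have hδle : ∀ z ∈ S, ∀ c ∈ C, δ ≤ ‖z + c‖ := by
    intro z hz c hc
    have h1 : δ ≤ infDist z (-C) := hmin hz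
    have h2 : infDist z (-C) ≤ dist z (-c) :=
      infDist_le_dist_of_mem (by simpa [Set.mem_neg] using hc)
    have : dist z (-c) = ‖z + c‖ := by
      rw [dist_eq_norm, sub_neg_eq_add]
    linarith [h1, h2.trans_eq this]
  -- lower bound on convex hull
  have hhull : ∀ x ∈ convexHull ℝ S, δ / (d + 1) ≤ ‖x‖ := by
    intro x hx
    obtain ⟨ι, hfin, z, w, hzS, haff, hwpos, hwsum, hxz⟩ :=
      eq_pos_convex_span_of_mem_convexHull hx
    have hne : Nonempty ι := by
      by_contra hemp
      rw [not_nonempty_iff] at hemp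
      rw [Finset.univ_eq_empty, Finset.sum_empty] at hwsum
      norm_num at hwsum
    -- card bound
    have hcard : Fintype.card ι ≤ d + 1 := by
      have h1 := haff.finrank_vectorSpan_add_one
      have h2 : Module.finrank ℝ (vectorSpan ℝ (Set.range z)) ≤ d := by
        have := Submodule.finrank_le (vectorSpan ℝ (Set.range z))
        simpa [finrank_euclideanSpace] using this
      omega
    obtain ⟨j, -, hj⟩ := Finset.exists_max_image Finset.univ w ⟨Classical.arbitrary ι, Finset.mem_univ _⟩
    have hwj : 1 / (d + 1 : ℝ) ≤ w j := by
      have hsum_le : (1:ℝ) ≤ Fintype.card ι * w j := by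
        rw [← hwsum]
        calc ∑ i, w i ≤ ∑ _i : ι, w j := Finset.sum_le_sum fun i _ => hj i (Finset.mem_univ i)
        _ = Fintype.card ι * w j := by rw [Finset.sum_const, nsmul_eq_mul, Finset.card_univ]
      have hcard' : (Fintype.card ι : ℝ) ≤ (d + 1 : ℝ) := by exact_mod_cast hcard
      have hwjpos : 0 < w j := hwpos j
      rw [div_le_iff₀ (by positivity)]
      nlinarith
    -- decompose
    set r : EuclideanSpace ℝ (Fin d) := ∑ i ∈ Finset.univ.erase j, w i • z i with hr
    have hrC : r ∈ C := by
      rw [hr]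
      refine Finset.sum_induction _ (· ∈ C) (fun a b ha hb => hadd a ha b hb) h0C ?_
      intro i _
      exact hCsmul (z i) (hzS (Set.mem_range_self i)).1 (w i) (hwpos i).le
    have hxdec : x = w j • (z j + (w j)⁻¹ • r) := by
      have hwj0 : w j ≠ 0 := (hwpos j).ne'
      rw [smul_add, smul_smul, mul_inv_cancel₀ hwj0, one_smul, ← hxz, hr,
        ← Finset.add_sum_erase _ _ (Finset.mem_univ j)]
    have hcC : (w j)⁻¹ • r ∈ C := hCsmul r hrC _ (inv_nonneg.2 (hwpos j).le)
    have hzj : z j ∈ S := hzS (Set.mem_range_self j)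
    have := hδle (z j) hzj _ hcC
    calc δ / (d + 1) ≤ w j * δ := by
          rw [div_eq_mul_inv, mul_comm]
          apply mul_le_mul_of_nonneg_right _ hδpos.le
          simpa [one_div] using hwj
      _ ≤ w j * ‖z j + (w j)⁻¹ • r‖ := by
          exact mul_le_mul_of_nonneg_left this (hwpos j).le
      _ = ‖x‖ := by
          rw [hxdec, norm_smul, Real.norm_eq_abs, abs_of_pos (hwpos j)]
  -- the closed convex set K
  set K : Set (EuclideanSpace ℝ (Fin d)) := closure (convexHull ℝ S) with hK
  have hKconv : Convex ℝ K := (convex_convexHull ℝ S).closure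
  have hKne : K.Nonempty := hSne.mono ((subset_convexHull ℝ S).trans subset_closure)
  have hKlow : ∀ x ∈ K, δ / (d + 1) ≤ ‖x‖ := by
    intro x hx
    have hcl2 : IsClosed {y : EuclideanSpace ℝ (Fin d) | δ / (d + 1) ≤ ‖y‖} :=
      isClosed_le continuous_const continuous_norm
    exact closure_minimal hhull hcl2 hx
  have hKC : K ⊆ C := closure_minimal (convexHull_min Set.inter_subset_left hCconv) hCcl
  obtain ⟨p, hpK, hpmin⟩ := exists_norm_eq_iInf_of_complete_convex hKne
    isClosed_closure.isComplete hKconv (0 : EuclideanSpace ℝ (Fin d))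
  have hvar : ∀ x ∈ K, ⟪(0:EuclideanSpace ℝ (Fin d)) - p, x - p⟫ ≤ 0 :=
    (norm_eq_iInf_iff_real_inner_le_zero hKconv hpK).1 hpmin
  have hpinner : ∀ x ∈ K, ‖p‖ ^ 2 ≤ ⟪x, p⟫ := by
    intro x hx
    have := hvar x hx
    rw [zero_sub, inner_sub_right, inner_neg_left, inner_neg_left] at this
    have h2 : ⟪p, p⟫ ≤ ⟪p, x⟫ := by linarith
    rw [real_inner_self_eq_norm_sq] at h2
    rwa [real_inner_comm] at h2
  have hp0 : p ≠ 0 := by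
    intro h
    have := hKlow p hpK
    rw [h, norm_zero] at this
    have : δ / (d+1) > 0 := by positivity
    linarith
  have hpnorm : 0 < ‖p‖ := norm_pos_iff.2 hp0
  refine ⟨(‖p‖)⁻¹ • p, hCsmul p (hKC hpK) _ (by positivity), ?_, ?_⟩
  · simp [norm_smul, abs_of_pos (inv_pos.2 hpnorm), inv_mul_cancel₀ hpnorm.ne']
  · intro v hvC hv0
    have hvnorm : 0 < ‖v‖ := norm_pos_iff.2 hv0
    have hvS : (‖v‖)⁻¹ • v ∈ S := by
      refine ⟨hCsmul v hvC _ (by positivity), ?_⟩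
      simp [norm_smul, abs_of_pos (inv_pos.2 hvnorm), inv_mul_cancel₀ hvnorm.ne']
    have hvK : (‖v‖)⁻¹ • v ∈ K := (subset_convexHull ℝ S).trans subset_closure hvS
    have h1 : ‖p‖ ^ 2 ≤ ⟪(‖v‖)⁻¹ • v, p⟫ := hpinner _ hvK
    rw [real_inner_smul_left] at h1
    have h2 : ‖v‖ * ‖p‖ ^ 2 ≤ ⟪v, p⟫ := by
      have := mul_le_mul_of_nonneg_left h1 hvnorm.le
      rwa [← mul_assoc, mul_inv_cancel₀ hvnorm.ne', one_mul] at this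
    rw [real_inner_smul_right]
    have : 0 < ‖v‖ * ‖p‖ ^ 2 := by positivity
    nlinarith [this, h2, inv_pos.2 hpnorm]

/-- An unbounded closed convex set in `ℝᵈ` containing no affine line admits a unit vector
`e` which is a recession direction and for which every slab `{⟨X, e⟩ ≤ h}` intersects the
set in a compact set. -/
theorem unbounded_line_free_convex_structure (d : ℕ) (hd : 1 ≤ d)
    (Ω : Set (EuclideanSpace ℝ (Fin d)))
    (hcl : IsClosed Ω) (hconv : Convex ℝ Ω)
    (hub : ¬ Bornology.IsBounded Ω)
    (hline : ¬ ∃ (q v : EuclideanSpace ℝ (Fin d)), v ≠ 0 ∧ ∀ t : ℝ, q + t • v ∈ Ω) :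
    ∃ e : EuclideanSpace ℝ (Fin d), ‖e‖ = 1 ∧
      (∀ X ∈ Ω, ∀ t : ℝ, 0 ≤ t → X + t • e ∈ Ω) ∧
      ∀ h : ℝ, IsCompact (Ω ∩ {X | ⟪X, e⟫ ≤ h}) := by
  have hΩne : Ω.Nonempty := by
    by_contra hemp
    rw [Set.not_nonempty_iff_eq_empty] at hemp
    exact hub (hemp ▸ Bornology.isBounded_empty)
  obtain ⟨X₀, hX₀⟩ := hΩne
  -- the recession cone
  set C : Set (EuclideanSpace ℝ (Fin d)) :=
    {v | ∀ X ∈ Ω, ∀ t : ℝ, 0 ≤ t → X + t • v ∈ Ω} with hC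
  have hCcl : IsClosed C := by
    have : C = ⋂ X ∈ Ω, ⋂ t ∈ Set.Ici (0:ℝ), (fun v => X + t • v) ⁻¹' Ω := by
      ext v
      simp [hC, Set.mem_iInter]
    rw [this]
    refine isClosed_biInter fun X hX => isClosed_biInter fun t ht => ?_
    exact hcl.preimage (continuous_const.add (continuous_id.const_smul t))
  have hCconv : Convex ℝ C := by
    intro v hv w hw a b ha hb hab
    intro X hX t ht
    have h1 : X + (t * a) • v ∈ Ω := hv X hX (t * a) (mul_nonneg ht ha)
    have h2 : (X + (t * a) • v) + (t * b) • w ∈ Ω :=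
      hw _ h1 (t * b) (mul_nonneg ht hb)
    have : X + t • (a • v + b • w) = (X + (t * a) • v) + (t * b) • w := by module
    rwa [this]
  have hCsmul : ∀ v ∈ C, ∀ s : ℝ, 0 ≤ s → s • v ∈ C := by
    intro v hv s hs X hX t ht
    have : X + (t * s) • v ∈ Ω := hv X hX (t * s) (mul_nonneg ht hs)
    rwa [show X + t • (s • v) = X + (t * s) • v by module]
  have hCpt : ∀ v ∈ C, -v ∈ C → v = 0 := by
    intro v hv hnv
    by_contra hv0
    refine hline ⟨X₀, v, hv0, fun t => ?_⟩
    rcases le_or_gt 0 t with ht | ht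
    · exact hv X₀ hX₀ t ht
    · have := hnv X₀ hX₀ (-t) (by linarith)
      rwa [show X₀ + (-t) • (-v) = X₀ + t • v by module] at this
  have hCne : ∃ v ∈ C, v ≠ 0 := by
    obtain ⟨v, hv1, hray, -⟩ := exists_ray_dir hcl hconv (le_refl Ω) hub hX₀
    refine ⟨v, ?_, by simp [← norm_pos_iff, hv1]⟩
    intro X hX t ht
    exact ray_transfer hcl hconv hray hX ht
  obtain ⟨e, heC, he1, hepos⟩ := pointed_cone_pos C hCcl hCconv hCsmul hCpt hCne
  refine ⟨e, he1, heC, ?_⟩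
  intro h
  rw [Metric.isCompact_iff_isClosed_bounded]
  constructor
  · exact hcl.inter (isClosed_le (continuous_id.inner continuous_const) continuous_const)
  · by_contra hB
    obtain ⟨v, hv1, hray, Y, hYA, hYn, hYt⟩ :=
      exists_ray_dir hcl hconv (Set.inter_subset_left) hB hX₀
    have hvC : v ∈ C := fun X hX t ht => ray_transfer hcl hconv hray hX ht
    have hvpos : 0 < ⟪v, e⟫ := hepos v hvC (by simp [← norm_pos_iff, hv1])
    -- but the inner products tend to something ≤ 0
    have hrpos : ∀ n, (0:ℝ) < ‖Y n - X₀‖ := fun n =>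
      lt_of_le_of_lt (Nat.cast_nonneg n) (hYn n)
    have hrtop : Tendsto (fun n => ‖Y n - X₀‖) atTop atTop :=
      tendsto_atTop_mono (fun n => (hYn n).le) tendsto_natCast_atTop_atTop
    have hinv0 : Tendsto (fun n => (‖Y n - X₀‖)⁻¹) atTop (nhds 0) :=
      hrtop.inv_tendsto_atTop
    have hbound0 : Tendsto (fun n => (‖Y n - X₀‖)⁻¹ * (h - ⟪X₀, e⟫)) atTop (nhds 0) := by
      simpa using hinv0.mul_const (h - ⟪X₀, e⟫)
    have hinner : Tendsto (fun n => ⟪(‖Y n - X₀‖)⁻¹ • (Y n - X₀), e⟫) atTop (nhds ⟪v, e⟫) :=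
      hYt.inner tendsto_const_nhds
    have hle : ⟪v, e⟫ ≤ 0 := by
      refine le_of_tendsto_of_tendsto' hinner hbound0 fun n => ?_
      rw [real_inner_smul_left]
      apply mul_le_mul_of_nonneg_left _ (inv_nonneg.2 (hrpos n).le)
      have := (hYA n).2
      rw [inner_sub_left]
      simp only [Set.mem_setOf_eq] at this
      linarith
    linarith
end

section
/- Fix n ≥ 1 and for r > 0, X ∈ ℝ^{n+1}, t ∈ ℝ define the parabolic cylinder P_r(X, t) := {(Y, s) ∈ ℝ^{n+1} × ℝ : ‖Y − X‖ < r and t − r²/(2n) < s ≤ t}. Let S ⊆ ℝ^{n+1} × ℝ, let f : S → ℝ, let (X₀, t₀) ∈ S and δ > 0 with f(X₀, t₀) > 0, and suppose f is bounded above on S ∩ P_{δ/f(X₀,t₀)}(X₀, t₀). Then there exists (Y, s) ∈ S ∩ P_{δ/(2 f(X₀,t₀))}(X₀, t₀) such that f(Y, s) ≥ f(X₀, t₀) and f(Z, r) ≤ 2·f(Y, s) for every (Z, r) ∈ S ∩ P_{δ/(4 f(Y,s))}(Y, s). -/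
/-- The parabolic cylinder `P_r(X, t)` in `ℝ^{n+1} × ℝ`. -/
def parabolicCylinder (n : ℕ) (r : ℝ) (X : EuclideanSpace ℝ (Fin (n + 1))) (t : ℝ) :
    Set (EuclideanSpace ℝ (Fin (n + 1)) × ℝ) :=
  {p | ‖p.1 - X‖ < r ∧ t - r ^ 2 / (2 * n) < p.2 ∧ p.2 ≤ t}

set_option maxHeartbeats 1000000 in
/-- Point-selection lemma: if `f` is positive at `(X₀, t₀) ∈ S` and bounded above on
`S ∩ P_{δ/f(X₀,t₀)}(X₀, t₀)`, then there is `(Y, s) ∈ S ∩ P_{δ/(2f(X₀,t₀))}(X₀, t₀)` with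
`f(Y, s) ≥ f(X₀, t₀)` and `f ≤ 2 f(Y, s)` on `S ∩ P_{δ/(4 f(Y,s))}(Y, s)`. -/
theorem point_selection (n : ℕ) (hn : 1 ≤ n)
    (S : Set (EuclideanSpace ℝ (Fin (n + 1)) × ℝ))
    (f : EuclideanSpace ℝ (Fin (n + 1)) × ℝ → ℝ)
    (X₀ : EuclideanSpace ℝ (Fin (n + 1))) (t₀ : ℝ) (hmem : (X₀, t₀) ∈ S)
    (δ : ℝ) (hδ : 0 < δ) (hf₀ : 0 < f (X₀, t₀))
    (hbdd : ∃ M : ℝ, ∀ p ∈ S ∩ parabolicCylinder n (δ / f (X₀, t₀)) X₀ t₀, f p ≤ M) :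
    ∃ (Y : EuclideanSpace ℝ (Fin (n + 1))) (s : ℝ),
      (Y, s) ∈ S ∩ parabolicCylinder n (δ / (2 * f (X₀, t₀))) X₀ t₀ ∧
      f (X₀, t₀) ≤ f (Y, s) ∧
      ∀ p ∈ S ∩ parabolicCylinder n (δ / (4 * f (Y, s))) Y s, f p ≤ 2 * f (Y, s) := by
  obtain ⟨M, hM⟩ := hbdd
  set q := f (X₀, t₀) with hqdef
  have hq0 : 0 < q := hf₀
  have h2n : (0 : ℝ) < 2 * n := by
    have : (1 : ℝ) ≤ n := by exact_mod_cast hn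
    linarith
  have hself : ∀ (Y : EuclideanSpace ℝ (Fin (n + 1))) (s : ℝ), q ≤ f (Y, s) →
      ‖Y - X₀‖ + δ / (2 * f (Y, s)) ≤ δ / (2 * q) →
      t₀ - s + (δ / (2 * f (Y, s))) ^ 2 / (2 * n) ≤ (δ / (2 * q)) ^ 2 / (2 * n) →
      s ≤ t₀ → (Y, s) ∈ parabolicCylinder n (δ / (2 * q)) X₀ t₀ := by
    intro Y s hqf h1 h2 hst
    have hf0 : 0 < f (Y, s) := lt_of_lt_of_le hq0 hqf
    have hd1 : 0 < δ / (2 * f (Y, s)) := by positivity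
    have hd2 : 0 < (δ / (2 * f (Y, s))) ^ 2 / (2 * n) := by positivity
    exact ⟨by linarith, by linarith, hst⟩
  suffices h : ∀ N : ℕ, ∀ (Y : EuclideanSpace ℝ (Fin (n + 1))) (s : ℝ),
      (Y, s) ∈ S → q ≤ f (Y, s) →
      ‖Y - X₀‖ + δ / (2 * f (Y, s)) ≤ δ / (2 * q) →
      t₀ - s + (δ / (2 * f (Y, s))) ^ 2 / (2 * n) ≤ (δ / (2 * q)) ^ 2 / (2 * n) →
      s ≤ t₀ → M < 2 ^ N * f (Y, s) →
      ∃ (Y' : EuclideanSpace ℝ (Fin (n + 1))) (s' : ℝ),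
        (Y', s') ∈ S ∩ parabolicCylinder n (δ / (2 * q)) X₀ t₀ ∧
        q ≤ f (Y', s') ∧
        ∀ p ∈ S ∩ parabolicCylinder n (δ / (4 * f (Y', s'))) Y' s', f p ≤ 2 * f (Y', s') by
    obtain ⟨N, hN⟩ := pow_unbounded_of_one_lt (M / q) (one_lt_two (α := ℝ))
    have hMq : M < 2 ^ N * q := by
      rw [div_lt_iff₀ hq0] at hN
      linarith
    have h0 : ‖X₀ - X₀‖ + δ / (2 * q) ≤ δ / (2 * q) := by simp
    have h0' : t₀ - t₀ + (δ / (2 * q)) ^ 2 / (2 * n) ≤ (δ / (2 * q)) ^ 2 / (2 * n) := by simp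
    exact h N X₀ t₀ hmem le_rfl h0 h0' le_rfl hMq
  intro N
  induction N with
  | zero =>
    intro Y s hYS hqf h1 h2 hst hMlt
    have hF : 0 < f (Y, s) := lt_of_lt_of_le hq0 hqf
    refine ⟨Y, s, ⟨hYS, hself Y s hqf h1 h2 hst⟩, hqf, ?_⟩
    rintro ⟨Z, r⟩ ⟨hZS, hc1, hc2, hc3⟩
    simp only at hc1 hc2 hc3
    have htri : ‖Z - X₀‖ ≤ ‖Z - Y‖ + ‖Y - X₀‖ := by
      simpa [dist_eq_norm] using dist_triangle Z Y X₀
    have hd1 : δ / (4 * f (Y, s)) ≤ δ / (2 * f (Y, s)) := by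
      gcongr <;> first | positivity | linarith
    have hd2 : δ / (2 * q) < δ / q := by
      apply div_lt_div_of_pos_left hδ hq0
      linarith
    have hA : (δ / (4 * f (Y, s))) ^ 2 / (2 * n) ≤ (δ / (2 * f (Y, s))) ^ 2 / (2 * n) := by
      gcongr <;> first | positivity | linarith
    have hsqC : (δ / (2 * q)) ^ 2 < (δ / q) ^ 2 := by
      have h1 : 0 < δ / (2 * q) := by positivity
      nlinarith
    have hC : (δ / (2 * q)) ^ 2 / (2 * n) < (δ / q) ^ 2 / (2 * n) :=
      div_lt_div_of_pos_right hsqC h2n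
    have hZbig : (Z, r) ∈ parabolicCylinder n (δ / q) X₀ t₀ := by
      refine ⟨by linarith, by linarith, le_trans hc3 hst⟩
    have hle : f (Z, r) ≤ M := hM (Z, r) ⟨hZS, hZbig⟩
    rw [pow_zero, one_mul] at hMlt
    linarith
  | succ N ih =>
    intro Y s hYS hqf h1 h2 hst hMlt
    have hF : 0 < f (Y, s) := lt_of_lt_of_le hq0 hqf
    by_cases hdone :
        ∀ p ∈ S ∩ parabolicCylinder n (δ / (4 * f (Y, s))) Y s, f p ≤ 2 * f (Y, s)
    · exact ⟨Y, s, ⟨hYS, hself Y s hqf h1 h2 hst⟩, hqf, hdone⟩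
    · push_neg at hdone
      obtain ⟨⟨Z, r⟩, ⟨hZS, hc1, hc2, hc3⟩, hZf⟩ := hdone
      simp only at hc1 hc2 hc3
      have hFp : 0 < f (Z, r) := by linarith
      have htri : ‖Z - X₀‖ ≤ ‖Z - Y‖ + ‖Y - X₀‖ := by
        simpa [dist_eq_norm] using dist_triangle Z Y X₀
      -- δ / (2 f(Z,r)) ≤ δ / (4 f(Y,s)) since 4 f(Y,s) ≤ 2 f(Z,r)
      have hd1 : δ / (2 * f (Z, r)) ≤ δ / (4 * f (Y, s)) := by
        rw [div_le_div_iff₀ (by positivity) (by positivity)]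
        nlinarith
      have heq : δ / (4 * f (Y, s)) + δ / (4 * f (Y, s)) = δ / (2 * f (Y, s)) := by
        field_simp
        ring
      have inv1 : ‖Z - X₀‖ + δ / (2 * f (Z, r)) ≤ δ / (2 * q) := by linarith
      have hsq1 : (δ / (2 * f (Z, r))) ^ 2 ≤ (δ / (4 * f (Y, s))) ^ 2 :=
        pow_le_pow_left₀ (by positivity) hd1 2
      have hsq2 : 2 * (δ / (4 * f (Y, s))) ^ 2 ≤ (δ / (2 * f (Y, s))) ^ 2 := by
        have hx : (δ / (4 * f (Y, s))) ^ 2 = (δ / (2 * f (Y, s))) ^ 2 / 4 := by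
          field_simp
          ring
        nlinarith [sq_nonneg (δ / (2 * f (Y, s)))]
      have hA : (δ / (2 * f (Z, r))) ^ 2 / (2 * n) ≤ (δ / (4 * f (Y, s))) ^ 2 / (2 * n) :=
        div_le_div_of_nonneg_right hsq1 h2n.le
      have hB : 2 * ((δ / (4 * f (Y, s))) ^ 2 / (2 * n)) ≤ (δ / (2 * f (Y, s))) ^ 2 / (2 * n) := by
        rw [← mul_div_assoc]
        exact div_le_div_of_nonneg_right hsq2 h2n.le
      have inv2 : t₀ - r + (δ / (2 * f (Z, r))) ^ 2 / (2 * n) ≤ (δ / (2 * q)) ^ 2 / (2 * n) := by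
        linarith
      have hMN : M < 2 ^ N * f (Z, r) := by
        have h2 : (0:ℝ) < 2 ^ N := by positivity
        have hps : (2:ℝ) ^ (N + 1) = 2 ^ N * 2 := pow_succ 2 N
        nlinarith [hMlt, hZf]
      exact ih Z r hZS (by linarith) inv1 inv2 (le_trans hc3 hst) hMN
end

section
/- Let E be a real normed vector space and let C ⊆ E be a closed convex set with 0 ∈ C. Suppose there are sequences (aₖ) and (bₖ) in C with ‖aₖ‖ → ∞ and ‖bₖ‖ → ∞ such that aₖ/‖aₖ‖ → u and bₖ/‖bₖ‖ → −u for some vector u. Then C contains the full line through each of its points in the direction u: for every p ∈ C and every t ∈ ℝ, p + t·u ∈ C. -/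
open Filter

/-- Ray membership from a sequence going to infinity in direction `v`. -/
lemma ray_mem_of_seq (E : Type*) [NormedAddCommGroup E] [NormedSpace ℝ E]
    (C : Set E) (hcl : IsClosed C) (hconv : Convex ℝ C) (h0 : (0 : E) ∈ C)
    (a : ℕ → E) (ha : ∀ k, a k ∈ C)
    (hna : Tendsto (fun k => ‖a k‖) atTop atTop)
    (v : E) (hv : Tendsto (fun k => ‖a k‖⁻¹ • a k) atTop (nhds v)) :
    ∀ t : ℝ, 0 ≤ t → t • v ∈ C := by
  intro t ht
  have htend : Tendsto (fun k => t • (‖a k‖⁻¹ • a k)) atTop (nhds (t • v)) :=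
    hv.const_smul t
  refine hcl.mem_of_tendsto htend ?_
  filter_upwards [hna.eventually_ge_atTop (max t 1)] with k hk
  have h1 : (1:ℝ) ≤ ‖a k‖ := le_trans (le_max_right t 1) hk
  have hpos : (0:ℝ) < ‖a k‖ := lt_of_lt_of_le one_pos h1
  have hle : t * ‖a k‖⁻¹ ≤ 1 := by
    rw [mul_inv_le_iff₀ hpos, one_mul]
    exact le_trans (le_max_left t 1) hk
  have hge : 0 ≤ t * ‖a k‖⁻¹ := mul_nonneg ht (inv_nonneg.2 hpos.le)
  have := hconv h0 (ha k) (by linarith : (0:ℝ) ≤ 1 - t * ‖a k‖⁻¹) hge (by ring)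
  simpa [smul_smul, mul_comm] using this

/-- If all nonnegative multiples of `v` lie in `C`, `C + ℝ≥0 v ⊆ C`. -/
lemma add_ray_mem (E : Type*) [NormedAddCommGroup E] [NormedSpace ℝ E]
    (C : Set E) (hcl : IsClosed C) (hconv : Convex ℝ C)
    (v : E) (hv : ∀ t : ℝ, 0 ≤ t → t • v ∈ C)
    (p : E) (hp : p ∈ C) (t : ℝ) (ht : 0 ≤ t) : p + t • v ∈ C := by
  have htend : Tendsto (fun n : ℕ => (1 - ((n:ℝ)+1)⁻¹) • p + t • v) atTop
      (nhds (p + t • v)) := by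
    have h1 : Tendsto (fun n : ℕ => ((n:ℝ)+1)⁻¹) atTop (nhds 0) :=
      tendsto_one_div_add_atTop_nhds_zero_nat.congr (fun n => by rw [one_div])
    have : Tendsto (fun n : ℕ => (1 - ((n:ℝ)+1)⁻¹)) atTop (nhds 1) := by
      simpa using (tendsto_const_nhds.sub h1)
    have := (this.smul_const p).add (tendsto_const_nhds (x := t • v))
    simpa using this
  refine hcl.mem_of_tendsto htend (Eventually.of_forall fun n => ?_)
  have hpos : (0:ℝ) < (n:ℝ) + 1 := by positivity
  have hεpos : (0:ℝ) < ((n:ℝ)+1)⁻¹ := inv_pos.2 hpos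
  have hεle : ((n:ℝ)+1)⁻¹ ≤ 1 := by
    rw [inv_le_one_iff₀]; right; linarith
  have hmem : (((n:ℝ)+1) * t) • v ∈ C := hv _ (by positivity)
  have := hconv hp hmem (by linarith : (0:ℝ) ≤ 1 - ((n:ℝ)+1)⁻¹) hεpos.le (by ring)
  have heq : ((n:ℝ)+1)⁻¹ • ((((n:ℝ)+1) * t) • v) = t • v := by
    rw [smul_smul, ← mul_assoc, inv_mul_cancel₀ hpos.ne', one_mul]
  rwa [heq] at this

/-- If a closed convex set `C` (with `0 ∈ C`) in a real normed space contains sequences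
going to infinity in directions converging to `u` and to `-u`, then `C` contains the full
line in direction `u` through each of its points. -/
theorem opposite_rays_give_line (E : Type*) [NormedAddCommGroup E] [NormedSpace ℝ E]
    (C : Set E) (hcl : IsClosed C) (hconv : Convex ℝ C) (h0 : (0 : E) ∈ C)
    (a b : ℕ → E) (ha : ∀ k, a k ∈ C) (hb : ∀ k, b k ∈ C)
    (hna : Tendsto (fun k => ‖a k‖) atTop atTop)
    (hnb : Tendsto (fun k => ‖b k‖) atTop atTop)
    (u : E)
    (hua : Tendsto (fun k => ‖a k‖⁻¹ • a k) atTop (nhds u))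
    (hub : Tendsto (fun k => ‖b k‖⁻¹ • b k) atTop (nhds (-u))) :
    ∀ p ∈ C, ∀ t : ℝ, p + t • u ∈ C := by
  have hray1 := ray_mem_of_seq E C hcl hconv h0 a ha hna u hua
  have hray2 := ray_mem_of_seq E C hcl hconv h0 b hb hnb (-u) hub
  intro p hp t
  rcases le_or_gt 0 t with ht | ht
  · exact add_ray_mem E C hcl hconv u hray1 p hp t ht
  · have : p + (-t) • (-u) ∈ C :=
      add_ray_mem E C hcl hconv (-u) hray2 p hp (-t) (by linarith)
    simpa using this
end

section
/- Let j > 0, let f : [0, j] → [0, ∞), and let t* ∈ (0, j) be such that λ := f(t*) > 0 and t(j − t)·f(t)² ≤ t*(j − t*)·λ² for all t ∈ [0, j]. Set α := −λ²·t* and ω := λ²·(j − t*). Then for every τ ∈ (α, ω), the rescaled function satisfies λ⁻¹·f(λ⁻²·τ + t*) ≤ √( ((−α)/(τ − α)) · (ω/(ω − τ)) ). -/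
/-- Type-IIb point-picking inequality: if `t*(j - t*)·f(t*)²` maximizes `t(j - t)·f(t)²`
over `[0, j]`, `λ := f(t*) > 0`, `α := -λ²t*`, `ω := λ²(j - t*)`, then for every
`τ ∈ (α, ω)` the rescaled function satisfies
`λ⁻¹ f(λ⁻²τ + t*) ≤ √(((-α)/(τ - α))·(ω/(ω - τ)))`. -/
theorem typeIIb_rescaled_bound (j : ℝ) (hj : 0 < j) (f : ℝ → ℝ)
    (hf : ∀ t ∈ Set.Icc (0 : ℝ) j, 0 ≤ f t)
    (tstar : ℝ) (htstar : tstar ∈ Set.Ioo (0 : ℝ) j) (hlam : 0 < f tstar)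
    (hmax : ∀ t ∈ Set.Icc (0 : ℝ) j,
      t * (j - t) * f t ^ 2 ≤ tstar * (j - tstar) * f tstar ^ 2) :
    ∀ τ ∈ Set.Ioo (-(f tstar ^ 2 * tstar)) (f tstar ^ 2 * (j - tstar)),
      (f tstar)⁻¹ * f ((f tstar ^ 2)⁻¹ * τ + tstar) ≤
        Real.sqrt ((f tstar ^ 2 * tstar / (τ - -(f tstar ^ 2 * tstar))) *
          (f tstar ^ 2 * (j - tstar) / (f tstar ^ 2 * (j - tstar) - τ))) := by
  intro τ hτ
  obtain ⟨hτ1, hτ2⟩ := hτ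
  obtain ⟨ht1, ht2⟩ := htstar
  set L : ℝ := f tstar ^ 2 with hL
  have hLpos : 0 < L := by positivity
  set t : ℝ := L⁻¹ * τ + tstar with ht
  have hA : 0 < τ + L * tstar := by linarith
  have hB : 0 < L * (j - tstar) - τ := by linarith
  have h1 : L⁻¹ * L = 1 := inv_mul_cancel₀ hLpos.ne'
  have htpos : 0 < t := by
    rw [ht]
    nlinarith [mul_lt_mul_of_pos_left hτ1 (inv_pos.mpr hLpos)]
  have htj : t < j := by
    rw [ht]
    nlinarith [mul_lt_mul_of_pos_left hτ2 (inv_pos.mpr hLpos)]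
  have hft : 0 ≤ f t := hf t ⟨htpos.le, htj.le⟩
  have hkey : t * (j - t) * f t ^ 2 ≤ tstar * (j - tstar) * L :=
    hmax t ⟨htpos.le, htj.le⟩
  have htprod : t * (j - t) = (τ + L * tstar) * (L * (j - tstar) - τ) / L ^ 2 := by
    rw [ht]
    field_simp
    ring
  rw [htprod] at hkey
  have hx : 0 ≤ (f tstar)⁻¹ * f t := by positivity
  rw [show τ - -(L * tstar) = τ + L * tstar by ring]
  rw [Real.le_sqrt hx]
  have hinv : (f tstar)⁻¹ ^ 2 = L⁻¹ := by
    rw [hL, ← inv_pow]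
  rw [div_mul_div_comm, mul_pow, hinv, le_div_iff₀ (by positivity),
    inv_mul_eq_div, div_mul_eq_mul_div, div_le_iff₀ hLpos]
  rw [div_mul_eq_mul_div, div_le_iff₀ (by positivity)] at hkey
  nlinarith [hkey, sq_nonneg (f t), hLpos]
  exact mul_nonneg (div_nonneg (by nlinarith) hA.le) (div_nonneg (by nlinarith) hB.le)
end

section
/- Let α > 0 and S > 0. Let ρ, v : [0, S] → ℝ with ρ(0) = 0, ρ(s) ≥ 0 for all s, ρ differentiable with ρ′(s) ≤ v(s), and v(s) ≥ (α/2)·ρ(s) for all s. Let h : [0, S] → (0, ∞) be differentiable with h′(s) ≤ −α·v(s)²·h(s) for all s ∈ [0, S]. Then h(S) ≤ h(0)·exp(−(α²/4)·ρ(S)²). -/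
/-- Gaussian decay for pinched expanders: if `ρ(0) = 0`, `ρ ≥ 0`, `ρ' ≤ v`,
`v ≥ (α/2)ρ`, and `h > 0` is differentiable with `h' ≤ -α v² h` on `[0, S]`, then
`h(S) ≤ h(0)·exp(-(α²/4)·ρ(S)²)`. -/
theorem expander_gaussian_decay (α S : ℝ) (hα : 0 < α) (hS : 0 < S)
    (ρ ρ' v : ℝ → ℝ) (hρ0 : ρ 0 = 0)
    (hρ_nonneg : ∀ s ∈ Set.Icc (0 : ℝ) S, 0 ≤ ρ s)
    (hρderiv : ∀ s ∈ Set.Icc (0 : ℝ) S, HasDerivAt ρ (ρ' s) s)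
    (hρ' : ∀ s ∈ Set.Icc (0 : ℝ) S, ρ' s ≤ v s)
    (hv : ∀ s ∈ Set.Icc (0 : ℝ) S, α / 2 * ρ s ≤ v s)
    (h h' : ℝ → ℝ) (hpos : ∀ s ∈ Set.Icc (0 : ℝ) S, 0 < h s)
    (hderiv : ∀ s ∈ Set.Icc (0 : ℝ) S, HasDerivAt h (h' s) s)
    (hineq : ∀ s ∈ Set.Icc (0 : ℝ) S, h' s ≤ -α * v s ^ 2 * h s) :
    h S ≤ h 0 * Real.exp (-(α ^ 2 / 4) * ρ S ^ 2) := by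
  set F : ℝ → ℝ := fun s => Real.log (h s) + α ^ 2 / 4 * ρ s ^ 2 with hF
  have hFd : ∀ s ∈ Set.Icc (0 : ℝ) S,
      HasDerivAt F (h' s / h s + α ^ 2 / 4 * (2 * ρ s ^ 1 * ρ' s)) s := by
    intro s hs
    exact ((hderiv s hs).log (hpos s hs).ne').add
      (((hρderiv s hs).pow 2).const_mul (α ^ 2 / 4))
  have hanti : AntitoneOn F (Set.Icc 0 S) := by
    apply antitoneOn_of_deriv_nonpos (convex_Icc 0 S)
    · exact fun s hs => ((hFd s hs).continuousAt).continuousWithinAt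
    · intro s hs
      rw [interior_Icc] at hs
      exact ((hFd s (Set.mem_Icc_of_Ioo hs)).differentiableAt).differentiableWithinAt
    · intro s hs
      rw [interior_Icc] at hs
      have hs' : s ∈ Set.Icc (0 : ℝ) S := Set.mem_Icc_of_Ioo hs
      rw [(hFd s hs').deriv]
      have hhpos := hpos s hs'
      have hv0 : 0 ≤ v s := le_trans (mul_nonneg (by positivity) (hρ_nonneg s hs')) (hv s hs')
      have h1 : h' s / h s ≤ -α * v s ^ 2 := by
        rw [div_le_iff₀ hhpos]
        exact hineq s hs'
      have h2 : α ^ 2 / 4 * (2 * ρ s ^ 1 * ρ' s) ≤ α * v s ^ 2 := by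
        have hρρ' : ρ s * ρ' s ≤ ρ s * v s :=
          mul_le_mul_of_nonneg_left (hρ' s hs') (hρ_nonneg s hs')
        have hρv : α / 2 * ρ s * v s ≤ v s * v s :=
          mul_le_mul_of_nonneg_right (hv s hs') hv0
        nlinarith [hρ_nonneg s hs', hα.le]
      nlinarith
  have hkey : F S ≤ F 0 := hanti (Set.left_mem_Icc.mpr hS.le)
    (Set.right_mem_Icc.mpr hS.le) hS.le
  have hlog : Real.log (h S) ≤ Real.log (h 0) + -(α ^ 2 / 4) * ρ S ^ 2 := by
    simp only [hF, hρ0] at hkey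
    nlinarith
  calc h S = Real.exp (Real.log (h S)) :=
        (Real.exp_log (hpos S (Set.right_mem_Icc.mpr hS.le))).symm
    _ ≤ Real.exp (Real.log (h 0) + -(α ^ 2 / 4) * ρ S ^ 2) := Real.exp_le_exp.mpr hlog
    _ = h 0 * Real.exp (-(α ^ 2 / 4) * ρ S ^ 2) := by
        rw [Real.exp_add, Real.exp_log (hpos 0 (Set.left_mem_Icc.mpr hS.le))]
end
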